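/- Every monochromatic connected graph G with independence number α(G) ≤ 2 satisfies pc_opt(G) ≤ 3. -/

import Mathlib

open SimpleGraph

/-- A walk is properly colored: no two consecutive edges share a color. -/
def ProperWalk {V : Type*} {G : SimpleGraph V} (c : Sym2 V → ℕ) {u v : V} (p : G.Walk u v) : Prop :=
  (p.edges.map c).Chain' (· ≠ ·)

/-- An edge-colored graph is properly connected. -/
def ProperlyConnected {V : Type*} (G : SimpleGraph V) (c : Sym2 V → ℕ) : Prop :=
  ∀ u v : V, u ≠ v → ∃ p : G.Walk u v, p.IsPath ∧ ProperWalk c p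

/-- Number of edges recolored away from the base color 0. -/
noncomputable def numRecolored {V : Type*} (G : SimpleGraph V) (c : Sym2 V → ℕ) : ℕ :=
  {e | e ∈ G.edgeSet ∧ c e ≠ 0}.ncard

/-- Number of new colors used. -/
noncomputable def numNewColors {V : Type*} (G : SimpleGraph V) (c : Sym2 V → ℕ) : ℕ :=
  (c '' {e | e ∈ G.edgeSet ∧ c e ≠ 0}).ncard

/-- Optimal proper connection number: minimum of p + q. -/
noncomputable def pcOpt {V : Type*} (G : SimpleGraph V) : ℕ :=
  sInf { n | ∃ c : Sym2 V → ℕ, ProperlyConnected G c ∧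
    n = numRecolored G c + numNewColors G c }

namespace PCAux

open Classical in
/-- The coloring giving color 1 to (at most) two special edges and 0 elsewhere. -/
noncomputable def col {V : Type*} (E1 E2 : Sym2 V) : Sym2 V → ℕ :=
  fun e => if e = E1 ∨ e = E2 then 1 else 0

variable {V : Type*} {G : SimpleGraph V} {c : Sym2 V → ℕ}

lemma col_left (E1 E2 : Sym2 V) : col E1 E2 E1 = 1 := by simp [col]
lemma col_right (E1 E2 : Sym2 V) : col E1 E2 E2 = 1 := by simp [col]
lemma col_zero {E1 E2 e : Sym2 V} (h1 : e ≠ E1) (h2 : e ≠ E2) : col E1 E2 e = 0 := by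
  simp [col, h1, h2]

lemma sym2_ne_left {a b x y : V} (h1 : a ≠ x) (h2 : a ≠ y) : s(a,b) ≠ s(x,y) := by
  rw [Ne, Sym2.eq_iff]; tauto

lemma sym2_ne_right {a b x y : V} (h1 : b ≠ y) (h2 : b ≠ x) : s(a,b) ≠ s(x,y) := by
  rw [Ne, Sym2.eq_iff]; tauto

/-- There is a properly colored path from `x` to `y`. -/
def Good (G : SimpleGraph V) (c : Sym2 V → ℕ) (x y : V) : Prop :=
  ∃ p : G.Walk x y, p.IsPath ∧ ProperWalk c p

lemma Good.symm {x y : V} (h : Good G c x y) : Good G c y x := by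
  obtain ⟨p, hp, hw⟩ := h
  refine ⟨p.reverse, hp.reverse, ?_⟩
  unfold ProperWalk at *
  rw [SimpleGraph.Walk.edges_reverse, List.map_reverse, List.Chain', List.isChain_reverse]
  exact (show List.IsChain _ _ from hw).imp fun a b hab => Ne.symm hab

lemma good1 {x y : V} (h : G.Adj x y) : Good G c x y := by
  refine ⟨SimpleGraph.Walk.cons h SimpleGraph.Walk.nil, ?_, ?_⟩
  · simp [SimpleGraph.Walk.cons_isPath_iff, h.ne]
  · simp [ProperWalk, List.Chain']

lemma good2 {x a y : V} (h1 : G.Adj x a) (h2 : G.Adj a y) (hxy : x ≠ y)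
    (hc : c s(x,a) ≠ c s(a,y)) : Good G c x y := by
  refine ⟨.cons h1 (.cons h2 .nil), ?_, ?_⟩
  · simp [SimpleGraph.Walk.cons_isPath_iff, h1.ne, h2.ne, hxy]
  · simp [ProperWalk, List.Chain', hc]

lemma good3 {x a b y : V} (h1 : G.Adj x a) (h2 : G.Adj a b) (h3 : G.Adj b y)
    (hxb : x ≠ b) (hxy : x ≠ y) (hay : a ≠ y)
    (hc1 : c s(x,a) ≠ c s(a,b)) (hc2 : c s(a,b) ≠ c s(b,y)) : Good G c x y := by
  refine ⟨.cons h1 (.cons h2 (.cons h3 .nil)), ?_, ?_⟩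
  · simp [SimpleGraph.Walk.cons_isPath_iff, h1.ne, h2.ne, h3.ne, hxb, hxy, hay]
  · simp [ProperWalk, List.Chain', hc1, hc2]

lemma good4 {x a b d y : V} (h1 : G.Adj x a) (h2 : G.Adj a b) (h3 : G.Adj b d) (h4 : G.Adj d y)
    (hxb : x ≠ b) (hxd : x ≠ d) (hxy : x ≠ y) (had : a ≠ d) (hay : a ≠ y) (hby : b ≠ y)
    (hc1 : c s(x,a) ≠ c s(a,b)) (hc2 : c s(a,b) ≠ c s(b,d)) (hc3 : c s(b,d) ≠ c s(d,y)) :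
    Good G c x y := by
  refine ⟨.cons h1 (.cons h2 (.cons h3 (.cons h4 .nil))), ?_, ?_⟩
  · simp [SimpleGraph.Walk.cons_isPath_iff, h1.ne, h2.ne, h3.ne, h4.ne, hxb, hxd, hxy, had,
      hay, hby]
  · simp [ProperWalk, List.Chain', hc1, hc2, hc3]

lemma good5 {x a b d e y : V} (h1 : G.Adj x a) (h2 : G.Adj a b) (h3 : G.Adj b d)
    (h4 : G.Adj d e) (h5 : G.Adj e y)
    (hxb : x ≠ b) (hxd : x ≠ d) (hxe : x ≠ e) (hxy : x ≠ y)
    (had : a ≠ d) (hae : a ≠ e) (hay : a ≠ y) (hbe : b ≠ e) (hby : b ≠ y) (hdy : d ≠ y)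
    (hc1 : c s(x,a) ≠ c s(a,b)) (hc2 : c s(a,b) ≠ c s(b,d)) (hc3 : c s(b,d) ≠ c s(d,e))
    (hc4 : c s(d,e) ≠ c s(e,y)) : Good G c x y := by
  refine ⟨.cons h1 (.cons h2 (.cons h3 (.cons h4 (.cons h5 .nil)))), ?_, ?_⟩
  · simp [SimpleGraph.Walk.cons_isPath_iff, h1.ne, h2.ne, h3.ne, h4.ne, h5.ne,
      hxb, hxd, hxe, hxy, had, hae, hay, hbe, hby, hdy]
  · simp [ProperWalk, List.Chain', hc1, hc2, hc3, hc4]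

lemma pcOpt_le3 (E1 E2 : Sym2 V) (h : ProperlyConnected G (col E1 E2)) : pcOpt G ≤ 3 := by
  have hmem : numRecolored G (col E1 E2) + numNewColors G (col E1 E2) ∈
      { n | ∃ c : Sym2 V → ℕ, ProperlyConnected G c ∧
        n = numRecolored G c + numNewColors G c } := ⟨col E1 E2, h, rfl⟩
  refine le_trans (Nat.sInf_le hmem) ?_
  have h1 : numRecolored G (col E1 E2) ≤ 2 := by
    have hsub : {e | e ∈ G.edgeSet ∧ col E1 E2 e ≠ 0} ⊆ {E1, E2} := by
      rintro e ⟨-, he⟩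
      by_contra hc
      simp only [Set.mem_insert_iff, Set.mem_singleton_iff] at hc
      push_neg at hc
      exact he (col_zero hc.1 hc.2)
    calc numRecolored G (col E1 E2) ≤ ({E1, E2} : Set (Sym2 V)).ncard :=
          Set.ncard_le_ncard hsub (Set.toFinite _)
      _ ≤ 2 := by
          refine le_trans (Set.ncard_insert_le _ _) ?_
          simp
  have h2 : numNewColors G (col E1 E2) ≤ 1 := by
    have hsub : col E1 E2 '' {e | e ∈ G.edgeSet ∧ col E1 E2 e ≠ 0} ⊆ {1} := by
      rintro n ⟨e, ⟨-, hne⟩, rfl⟩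
      simp only [Set.mem_singleton_iff, col] at *
      split at hne <;> simp_all [col]
    calc numNewColors G (col E1 E2) ≤ ({1} : Set ℕ).ncard :=
          Set.ncard_le_ncard hsub (Set.toFinite _)
      _ = 1 := Set.ncard_singleton _
  omega


/-- Case: u,v nonadjacent, c0 a common neighbor, b0 a neighbor of v not adjacent to u.
Recolor edges s(u,c0) and s(v,b0) with color 1. -/
lemma L3 {u v c0 b0 : V}
    (hclq : ∀ w x y : V, ¬G.Adj w x → ¬G.Adj w y → x ≠ y → x ≠ w → y ≠ w → G.Adj x y)
    (hclass : ∀ w, w ≠ u → w ≠ v → G.Adj u w ∨ G.Adj v w)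
    (hne : u ≠ v) (huv : ¬G.Adj u v)
    (hc0u : G.Adj u c0) (hc0v : G.Adj v c0)
    (hb0u : ¬G.Adj u b0) (hb0v : G.Adj v b0) :
    ProperlyConnected G (col s(u,c0) s(v,b0)) := by
  set cc := col s(u,c0) s(v,b0) with hccdef
  have nuc0 : u ≠ c0 := hc0u.ne
  have nvc0 : v ≠ c0 := hc0v.ne
  have nvb0 : v ≠ b0 := hb0v.ne
  have nub0 : u ≠ b0 := by rintro rfl; exact huv hb0v.symm
  have nc0b0 : c0 ≠ b0 := by rintro rfl; exact hb0u hc0u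
  have cE1 : cc s(u,c0) = 1 := col_left _ _
  have cE2 : cc s(v,b0) = 1 := col_right _ _
  have zc0v : cc s(c0,v) = 0 :=
    col_zero (sym2_ne_right nvc0 hne.symm) (sym2_ne_left nvc0.symm nc0b0)
  -- the basic properly colored path u - c0 - v
  have Guv : Good G cc u v := good2 hc0u hc0v.symm hne (by rw [cE1, zc0v]; omega)
  -- pairs (u, y) with y in B
  have GuB : ∀ y, ¬G.Adj u y → G.Adj v y → Good G cc u y := by
    intro y huy hvy
    have nyu : y ≠ u := by rintro rfl; exact huv hvy.symm
    have nyv : y ≠ v := hvy.ne'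
    have nyc0 : y ≠ c0 := by rintro rfl; exact huy hc0u
    by_cases hyc0 : G.Adj c0 y
    · have z2 : cc s(c0,y) = 0 :=
        col_zero (sym2_ne_right nyc0 nyu) (sym2_ne_left nvc0.symm nc0b0)
      exact good2 hc0u hyc0 nyu.symm (by rw [cE1, z2]; omega)
    · by_cases hyb0 : y = b0
      · subst hyb0
        exact good3 hc0u hc0v.symm hb0v hne nub0 nc0b0
          (by rw [cE1, zc0v]; omega) (by rw [zc0v, cE2]; omega)
      · have hb0y : G.Adj b0 y :=
          hclq u b0 y hb0u huy (fun h => hyb0 h.symm) nub0.symm nyu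
        have z3 : cc s(b0,y) = 0 :=
          col_zero (sym2_ne_left nub0.symm nc0b0.symm) (sym2_ne_right hyb0 nyv)
        exact good4 hc0u hc0v.symm hb0v hb0y hne nub0 nyu.symm nc0b0 nyc0.symm nyv.symm
          (by rw [cE1, zc0v]; omega) (by rw [zc0v, cE2]; omega) (by rw [cE2, z3]; omega)
  -- pairs (x, v) with x in A
  have GvA : ∀ x, G.Adj u x → ¬G.Adj v x → Good G cc x v := by
    intro x hux hvx
    have nxu : x ≠ u := hux.ne'
    have nxv : x ≠ v := by rintro rfl; exact huv hux
    have nxc0 : x ≠ c0 := by rintro rfl; exact hvx hc0v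
    have zxu : cc s(x,u) = 0 :=
      col_zero (sym2_ne_left nxu nxc0) (sym2_ne_right nub0 hne)
    exact good3 hux.symm hc0u hc0v.symm nxc0 nxv hne
      (by rw [zxu, cE1]; omega) (by rw [cE1, zc0v]; omega)
  -- pairs (x, y) with x in A, y in B
  have GAB : ∀ x y, x ≠ y → ¬G.Adj x y → G.Adj u x → ¬G.Adj v x → ¬G.Adj u y → G.Adj v y →
      Good G cc x y := by
    intro x y hnexy hxy hux hvx huy hvy
    have nxu : x ≠ u := hux.ne'
    have nxv : x ≠ v := by rintro rfl; exact huv hux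
    have nxc0 : x ≠ c0 := by rintro rfl; exact hvx hc0v
    have nxb0 : x ≠ b0 := by rintro rfl; exact hb0u hux
    have nyu : y ≠ u := by rintro rfl; exact hxy hux.symm
    have nyv : y ≠ v := hvy.ne'
    have nyc0 : y ≠ c0 := by rintro rfl; exact huy hc0u
    have zxu : cc s(x,u) = 0 :=
      col_zero (sym2_ne_left nxu nxc0) (sym2_ne_right nub0 hne)
    by_cases hyc0 : G.Adj c0 y
    · have zc0y : cc s(c0,y) = 0 :=
        col_zero (sym2_ne_right nyc0 nyu) (sym2_ne_left nvc0.symm nc0b0)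
      exact good3 hux.symm hc0u hyc0 nxc0 hnexy nyu.symm
        (by rw [zxu, cE1]; omega) (by rw [cE1, zc0y]; omega)
    · by_cases hyb0 : y = b0
      · subst hyb0
        exact good4 hux.symm hc0u hc0v.symm hb0v nxc0 nxv nxb0 hne nub0 nc0b0
          (by rw [zxu, cE1]; omega) (by rw [cE1, zc0v]; omega) (by rw [zc0v, cE2]; omega)
      · have hb0y : G.Adj b0 y :=
          hclq u b0 y hb0u huy (fun h => hyb0 h.symm) nub0.symm nyu
        have zb0y : cc s(b0,y) = 0 :=
          col_zero (sym2_ne_left nub0.symm nc0b0.symm) (sym2_ne_right hyb0 nyv)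
        exact good5 hux.symm hc0u hc0v.symm hb0v hb0y nxc0 nxv nxb0 hnexy hne nub0
          nyu.symm nc0b0 nyc0.symm nyv.symm
          (by rw [zxu, cE1]; omega) (by rw [cE1, zc0v]; omega) (by rw [zc0v, cE2]; omega)
          (by rw [cE2, zb0y]; omega)
  -- pairs (x, y) with x in A, y in C
  have GAC : ∀ x y, x ≠ y → ¬G.Adj x y → G.Adj u x → ¬G.Adj v x → G.Adj u y → G.Adj v y →
      Good G cc x y := by
    intro x y hnexy hxy hux hvx huy hvy
    have nxu : x ≠ u := hux.ne'
    have nxv : x ≠ v := by rintro rfl; exact huv hux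
    have nxc0 : x ≠ c0 := by rintro rfl; exact hvx hc0v
    have nxb0 : x ≠ b0 := by rintro rfl; exact hb0u hux
    have nyu : y ≠ u := huy.ne'
    have nyv : y ≠ v := hvy.ne'
    have nyb0 : y ≠ b0 := by rintro rfl; exact hb0u huy
    have zxu : cc s(x,u) = 0 :=
      col_zero (sym2_ne_left nxu nxc0) (sym2_ne_right nub0 hne)
    by_cases hyc0 : y = c0
    · subst hyc0
      exact good2 hux.symm hc0u hnexy (by rw [zxu, cE1]; omega)
    · by_cases hadjc0y : G.Adj c0 y
      · have zc0y : cc s(c0,y) = 0 :=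
          col_zero (sym2_ne_right hyc0 nyu) (sym2_ne_left nvc0.symm nc0b0)
        exact good3 hux.symm hc0u hadjc0y nxc0 hnexy nyu.symm
          (by rw [zxu, cE1]; omega) (by rw [cE1, zc0y]; omega)
      · by_cases hadjb0y : G.Adj b0 y
        · have zb0y : cc s(b0,y) = 0 :=
            col_zero (sym2_ne_left nub0.symm nc0b0.symm) (sym2_ne_right nyb0 nyv)
          exact good5 hux.symm hc0u hc0v.symm hb0v hadjb0y nxc0 nxv nxb0 hnexy hne nub0
            nyu.symm nc0b0 (fun h => hyc0 h.symm) nyv.symm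
            (by rw [zxu, cE1]; omega) (by rw [cE1, zc0v]; omega) (by rw [zc0v, cE2]; omega)
            (by rw [cE2, zb0y]; omega)
        · have hxb0 : G.Adj x b0 :=
            hclq y x b0 (fun h => hxy h.symm) (fun h => hadjb0y h.symm) nxb0
              hnexy nyb0.symm
          have zyv : cc s(y,v) = 0 :=
            col_zero (sym2_ne_right nvc0 hne.symm) (sym2_ne_left nyv nyb0)
          have zb0x : cc s(b0,x) = 0 :=
            col_zero (sym2_ne_left nub0.symm nc0b0.symm) (sym2_ne_right nxb0 nxv)
          exact (good3 hvy.symm hb0v hxb0.symm nyb0 hnexy.symm nxv.symm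
            (by rw [zyv, cE2]; omega) (by rw [cE2, zb0x]; omega)).symm
  -- pairs (x, y) with x in B, y in C
  have GBC : ∀ x y, x ≠ y → ¬G.Adj x y → ¬G.Adj u x → G.Adj v x → G.Adj u y → G.Adj v y →
      Good G cc x y := by
    intro x y hnexy hxy hux hvx huy hvy
    have nxu : x ≠ u := by rintro rfl; exact huv hvx.symm
    have nxv : x ≠ v := hvx.ne'
    have nyu : y ≠ u := huy.ne'
    have nyv : y ≠ v := hvy.ne'
    have nyb0 : y ≠ b0 := by rintro rfl; exact hb0u huy
    have zyv : cc s(y,v) = 0 :=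
      col_zero (sym2_ne_right nvc0 hne.symm) (sym2_ne_left nyv nyb0)
    by_cases hxb0 : x = b0
    · subst hxb0
      exact (good2 hvy.symm hb0v hnexy.symm (by rw [zyv, cE2]; omega)).symm
    · have hb0x : G.Adj b0 x :=
        hclq u b0 x hb0u hux (fun h => hxb0 h.symm) nub0.symm nxu
      have zb0x : cc s(b0,x) = 0 :=
        col_zero (sym2_ne_left nub0.symm nc0b0.symm) (sym2_ne_right hxb0 nxv)
      exact (good3 hvy.symm hb0v hb0x nyb0 hnexy.symm nxv.symm
        (by rw [zyv, cE2]; omega) (by rw [cE2, zb0x]; omega)).symm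
  -- pairs (x, y) with x, y in C
  have GCC : ∀ x y, x ≠ y → ¬G.Adj x y → G.Adj u x → G.Adj v x → G.Adj u y → G.Adj v y →
      Good G cc x y := by
    intro x y hnexy hxy hux hvx huy hvy
    have nxu : x ≠ u := hux.ne'
    have nyu : y ≠ u := huy.ne'
    by_cases hxc0 : x = c0
    · subst hxc0
      have zyu : cc s(y,u) = 0 :=
        col_zero (sym2_ne_left nyu hnexy.symm) (sym2_ne_right nub0 hne)
      exact (good2 huy.symm hc0u hnexy.symm (by rw [zyu, cE1]; omega)).symm
    · by_cases hyc0 : y = c0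
      · subst hyc0
        have zxu : cc s(x,u) = 0 :=
          col_zero (sym2_ne_left nxu hnexy) (sym2_ne_right nub0 hne)
        exact good2 hux.symm hc0u hnexy (by rw [zxu, cE1]; omega)
      · have zxu : cc s(x,u) = 0 :=
          col_zero (sym2_ne_left nxu hxc0) (sym2_ne_right nub0 hne)
        have zyu : cc s(y,u) = 0 :=
          col_zero (sym2_ne_left nyu hyc0) (sym2_ne_right nub0 hne)
        by_cases hc0y : G.Adj c0 y
        · have zc0y : cc s(c0,y) = 0 :=
            col_zero (sym2_ne_right hyc0 nyu) (sym2_ne_left nvc0.symm nc0b0)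
          exact good3 hux.symm hc0u hc0y hxc0 hnexy nyu.symm
            (by rw [zxu, cE1]; omega) (by rw [cE1, zc0y]; omega)
        · have hc0x : G.Adj x c0 :=
            hclq y x c0 (fun h => hxy h.symm) (fun h => hc0y h.symm) hxc0 hnexy
              (fun h => hyc0 h.symm)
          have zc0x : cc s(c0,x) = 0 :=
            col_zero (sym2_ne_right hxc0 nxu) (sym2_ne_left nvc0.symm nc0b0)
          exact (good3 huy.symm hc0u hc0x.symm hyc0 hnexy.symm nxu.symm
            (by rw [zyu, cE1]; omega) (by rw [cE1, zc0x]; omega)).symm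
  -- classification of any vertex other than u, v
  have hclass3 : ∀ w, w ≠ u → w ≠ v →
      (G.Adj u w ∧ G.Adj v w) ∨ (G.Adj u w ∧ ¬G.Adj v w) ∨ (¬G.Adj u w ∧ G.Adj v w) := by
    intro w h1 h2
    by_cases a : G.Adj u w
    · by_cases b : G.Adj v w
      · exact Or.inl ⟨a, b⟩
      · exact Or.inr (Or.inl ⟨a, b⟩)
    · rcases hclass w h1 h2 with h | h
      · exact absurd h a
      · exact Or.inr (Or.inr ⟨a, h⟩)
  -- the main dispatch
  intro x y hnexy
  by_cases hadj : G.Adj x y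
  · exact good1 hadj
  by_cases hxu : x = u
  · subst hxu
    by_cases hyv : y = v
    · subst hyv; exact Guv
    · rcases hclass y (Ne.symm hnexy) hyv with h | h
      · exact absurd h hadj
      · exact GuB y hadj h
  by_cases hxv : x = v
  · subst hxv
    by_cases hyu : y = u
    · subst hyu; exact Guv.symm
    · rcases hclass y hyu (Ne.symm hnexy) with h | h
      · exact (GvA y h hadj).symm
      · exact absurd h hadj
  by_cases hyu : y = u
  · subst hyu
    rcases hclass x hxu hxv with h | h
    · exact absurd h.symm hadj
    · exact (GuB x (fun hh => hadj hh.symm) h).symm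
  by_cases hyv : y = v
  · subst hyv
    rcases hclass x hxu hxv with h | h
    · exact GvA x h (fun hh => hadj hh.symm)
    · exact absurd h.symm hadj
  rcases hclass3 x hxu hxv with ⟨hux, hvx⟩ | ⟨hux, hvx⟩ | ⟨hux, hvx⟩ <;>
    rcases hclass3 y hyu hyv with ⟨huy, hvy⟩ | ⟨huy, hvy⟩ | ⟨huy, hvy⟩
  · exact GCC x y hnexy hadj hux hvx huy hvy
  · exact (GAC y x (Ne.symm hnexy) (fun h => hadj h.symm) huy hvy hux hvx).symm
  · exact (GBC y x (Ne.symm hnexy) (fun h => hadj h.symm) huy hvy hux hvx).symm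
  · exact GAC x y hnexy hadj hux hvx huy hvy
  · exact absurd (hclq v x y hvx hvy hnexy hxv hyv) hadj
  · exact GAB x y hnexy hadj hux hvx huy hvy
  · exact GBC x y hnexy hadj hux hvx huy hvy
  · exact (GAB y x (Ne.symm hnexy) (fun h => hadj h.symm) huy hvy hux hvx).symm
  · exact absurd (hclq u x y hux huy hnexy hxu hyu) hadj


/-- Case: u,v nonadjacent, c0 a common neighbor, and every other vertex is adjacent
to both u and v. Recolor the single edge s(u,c0). -/
lemma L2 {u v c0 : V}
    (hclq : ∀ w x y : V, ¬G.Adj w x → ¬G.Adj w y → x ≠ y → x ≠ w → y ≠ w → G.Adj x y)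
    (hne : u ≠ v) (huv : ¬G.Adj u v)
    (hc0u : G.Adj u c0) (hc0v : G.Adj v c0)
    (hfull : ∀ w, w ≠ u → w ≠ v → G.Adj u w ∧ G.Adj v w) :
    ProperlyConnected G (col s(u,c0) s(u,c0)) := by
  set cc := col s(u,c0) s(u,c0) with hccdef
  have nuc0 : u ≠ c0 := hc0u.ne
  have nvc0 : v ≠ c0 := hc0v.ne
  have cE1 : cc s(u,c0) = 1 := col_left _ _
  have zc0v : cc s(c0,v) = 0 := by
    have h : s(c0,v) ≠ s(u,c0) := sym2_ne_right nvc0 hne.symm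
    exact col_zero h h
  intro x y hnexy
  by_cases hadj : G.Adj x y
  · exact good1 hadj
  by_cases hxu : x = u
  · subst hxu
    by_cases hyv : y = v
    · subst hyv
      exact good2 hc0u hc0v.symm hne (by rw [cE1, zc0v]; omega)
    · exact absurd ((hfull y (Ne.symm hnexy) hyv).1) hadj
  by_cases hxv : x = v
  · subst hxv
    by_cases hyu : y = u
    · subst hyu
      exact (good2 hc0u hc0v.symm hne (by rw [cE1, zc0v]; omega)).symm
    · exact absurd ((hfull y hyu (Ne.symm hnexy)).2) hadj
  by_cases hyu : y = u
  · subst hyu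
    exact absurd ((hfull x hxu hxv).1.symm) hadj
  by_cases hyv : y = v
  · subst hyv
    exact absurd ((hfull x hxu hxv).2.symm) hadj
  obtain ⟨hux, hvx⟩ := hfull x hxu hxv
  obtain ⟨huy, hvy⟩ := hfull y hyu hyv
  have nxu : x ≠ u := hux.ne'
  have nyu : y ≠ u := huy.ne'
  by_cases hxc0 : x = c0
  · subst hxc0
    have zyu : cc s(y,u) = 0 := by
      have h : s(y,u) ≠ s(u,x) := sym2_ne_left nyu hnexy.symm
      exact col_zero h h
    exact (good2 huy.symm hc0u hnexy.symm (by rw [zyu, cE1]; omega)).symm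
  · have zxu : cc s(x,u) = 0 := by
      have h : s(x,u) ≠ s(u,c0) := sym2_ne_left nxu hxc0
      exact col_zero h h
    by_cases hyc0 : y = c0
    · subst hyc0
      exact good2 hux.symm hc0u hnexy (by rw [zxu, cE1]; omega)
    · have zyu : cc s(y,u) = 0 := by
        have h : s(y,u) ≠ s(u,c0) := sym2_ne_left nyu hyc0
        exact col_zero h h
      by_cases hc0y : G.Adj c0 y
      · have zc0y : cc s(c0,y) = 0 := by
          have h : s(c0,y) ≠ s(u,c0) := sym2_ne_right hyc0 nyu
          exact col_zero h h
        exact good3 hux.symm hc0u hc0y hxc0 hnexy nyu.symm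
          (by rw [zxu, cE1]; omega) (by rw [cE1, zc0y]; omega)
      · have hc0x : G.Adj x c0 :=
          hclq y x c0 (fun h => hadj h.symm) (fun h => hc0y h.symm) hxc0 hnexy
            (fun h => hyc0 h.symm)
        have zc0x : cc s(c0,x) = 0 := by
          have h : s(c0,x) ≠ s(u,c0) := sym2_ne_right hxc0 nxu
          exact col_zero h h
        exact (good3 huy.symm hc0u hc0x.symm hyc0 hnexy.symm nxu.symm
          (by rw [zyu, cE1]; omega) (by rw [cE1, zc0x]; omega)).symm

/-- Case: u,v nonadjacent with no common neighbor; st,tt an edge crossing from the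
side of u to the side of v. Recolor the single edge s(st,tt). -/
lemma L1 {u v st tt : V}
    (hclq : ∀ w x y : V, ¬G.Adj w x → ¬G.Adj w y → x ≠ y → x ≠ w → y ≠ w → G.Adj x y)
    (hne : u ≠ v) (huv : ¬G.Adj u v)
    (hnoC : ∀ w, ¬(G.Adj u w ∧ G.Adj v w))
    (hst : G.Adj st tt)
    (hsT : ¬(st = v ∨ G.Adj v st)) (ht : tt = v ∨ G.Adj v tt) :
    ProperlyConnected G (col s(st,tt) s(st,tt)) := by
  set cc := col s(st,tt) s(st,tt) with hccdef
  have cE1 : cc s(st,tt) = 1 := col_left _ _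
  have hSclq : ∀ w z, ¬(w = v ∨ G.Adj v w) → ¬(z = v ∨ G.Adj v z) → w ≠ z → G.Adj w z := by
    intro w z hw hz hwz
    push_neg at hw hz
    exact hclq v w z hw.2 hz.2 hwz hw.1 hz.1
  have hTclq : ∀ w z, (w = v ∨ G.Adj v w) → (z = v ∨ G.Adj v z) → w ≠ z → G.Adj w z := by
    intro w z hw hz hwz
    rcases hw with rfl | hw
    · rcases hz with rfl | hz
      · exact absurd rfl hwz
      · exact hz
    · rcases hz with rfl | hz
      · exact hw.symm
      · have hwu : w ≠ u := by rintro rfl; exact huv hw.symm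
        have hzu : z ≠ u := by rintro rfl; exact huv hz.symm
        have h1 : ¬G.Adj u w := fun h => hnoC w ⟨h, hw⟩
        have h2 : ¬G.Adj u z := fun h => hnoC z ⟨h, hz⟩
        exact hclq u w z h1 h2 hwz hwu hzu
  have hcross : ∀ w z, w ≠ z → ¬G.Adj w z → ¬(w = v ∨ G.Adj v w) → (z = v ∨ G.Adj v z) →
      Good G cc w z := by
    intro w z hwz hadj hw hz
    have nzs : z ≠ st := by rintro rfl; exact hsT hz
    have nws : w ≠ tt := by rintro rfl; exact hw ht
    by_cases hws : w = st
    · subst hws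
      by_cases hzt : z = tt
      · subst hzt; exact absurd hst hadj
      · have ztz : cc s(tt,z) = 0 := by
          have h : s(tt,z) ≠ s(w,tt) := sym2_ne_right hzt nzs
          exact col_zero h h
        exact good2 hst (hTclq tt z ht hz (fun h => hzt h.symm)) hwz
          (by rw [cE1, ztz]; omega)
    · have hws' : G.Adj w st := hSclq w st hw hsT hws
      have zws : cc s(w,st) = 0 := by
        have h : s(w,st) ≠ s(st,tt) := sym2_ne_left hws nws
        exact col_zero h h
      by_cases hzt : z = tt
      · subst hzt
        exact good2 hws' hst hwz (by rw [zws, cE1]; omega)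
      · have htz : G.Adj tt z := hTclq tt z ht hz (fun h => hzt h.symm)
        have ztz : cc s(tt,z) = 0 := by
          have h : s(tt,z) ≠ s(st,tt) := sym2_ne_right hzt nzs
          exact col_zero h h
        exact good3 hws' hst htz nws hwz nzs.symm
          (by rw [zws, cE1]; omega) (by rw [cE1, ztz]; omega)
  intro x y hnexy
  by_cases hadj : G.Adj x y
  · exact good1 hadj
  by_cases hxT : x = v ∨ G.Adj v x
  · by_cases hyT : y = v ∨ G.Adj v y
    · exact absurd (hTclq x y hxT hyT hnexy) hadj
    · exact (hcross y x hnexy.symm (fun h => hadj h.symm) hyT hxT).symm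
  · by_cases hyT : y = v ∨ G.Adj v y
    · exact hcross x y hnexy hadj hxT hyT
    · exact absurd (hSclq x y hxT hyT hnexy) hadj

lemma crossing {T : Set V} : ∀ {x v : V} (p : G.Walk x v), v ∈ T → x ∉ T →
    ∃ a b, G.Adj a b ∧ a ∉ T ∧ b ∈ T := by
  intro x v p
  induction p with
  | nil => intro hv hx; exact absurd hv hx
  | @cons a b w h q ih =>
    intro hv hx
    by_cases hb : b ∈ T
    · exact ⟨a, b, h, hx, hb⟩
    · exact ih hv hb

end PCAux

theorem stmt8 {V : Type*} [Fintype V] (G : SimpleGraph V) (hconn : G.Connected)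
    (halpha : ∀ a b c : V, a ≠ b → a ≠ c → b ≠ c →
      G.Adj a b ∨ G.Adj a c ∨ G.Adj b c) :
    pcOpt G ≤ 3 := by
  classical
  by_cases hcomp : ∀ x y : V, x ≠ y → G.Adj x y
  · -- complete graph: the all-0 coloring works, p + q = 0
    have hpc : ProperlyConnected G (fun _ => 0) := by
      intro x y hxy
      exact ⟨SimpleGraph.Walk.cons (hcomp x y hxy) SimpleGraph.Walk.nil,
        by simp [SimpleGraph.Walk.cons_isPath_iff, (hcomp x y hxy).ne], by simp [ProperWalk, List.Chain']⟩
    have h0 : (0 : ℕ) ∈ { n | ∃ c : Sym2 V → ℕ, ProperlyConnected G c ∧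
        n = numRecolored G c + numNewColors G c } := by
      refine ⟨fun _ => 0, hpc, ?_⟩
      simp [numRecolored, numNewColors]
    exact le_trans (Nat.sInf_le h0) (by omega)
  · push_neg at hcomp
    obtain ⟨u, v, hne, huv⟩ := hcomp
    have hclq : ∀ w x y : V, ¬G.Adj w x → ¬G.Adj w y → x ≠ y → x ≠ w → y ≠ w → G.Adj x y := by
      intro w x y h1 h2 h3 h4 h5
      rcases halpha w x y (Ne.symm h4) (Ne.symm h5) h3 with h | h | h
      · exact absurd h h1
      · exact absurd h h2
      · exact h
    have hclass : ∀ w, w ≠ u → w ≠ v → G.Adj u w ∨ G.Adj v w := by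
      intro w h1 h2
      rcases halpha u v w hne (Ne.symm h1) (Ne.symm h2) with h | h | h
      · exact absurd h huv
      · exact Or.inl h
      · exact Or.inr h
    by_cases hC : ∃ w, G.Adj u w ∧ G.Adj v w
    · obtain ⟨c0, hc0u, hc0v⟩ := hC
      by_cases hB : ∃ w, ¬G.Adj u w ∧ G.Adj v w
      · obtain ⟨b0, hb0u, hb0v⟩ := hB
        exact PCAux.pcOpt_le3 _ _ (PCAux.L3 hclq hclass hne huv hc0u hc0v hb0u hb0v)
      · by_cases hA : ∃ w, ¬G.Adj v w ∧ G.Adj u w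
        · obtain ⟨a0, ha0v, ha0u⟩ := hA
          have hclass' : ∀ w, w ≠ v → w ≠ u → G.Adj v w ∨ G.Adj u w := by
            intro w h1 h2
            exact (hclass w h2 h1).symm
          exact PCAux.pcOpt_le3 _ _
            (PCAux.L3 hclq hclass' hne.symm (fun h => huv h.symm) hc0v hc0u ha0v ha0u)
        · push_neg at hA hB
          have hfull : ∀ w, w ≠ u → w ≠ v → G.Adj u w ∧ G.Adj v w := by
            intro w h1 h2
            rcases hclass w h1 h2 with h | h
            · exact ⟨h, by_contra fun hv => hA w hv h⟩
            · exact ⟨by_contra fun hu => hB w hu h, h⟩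
          exact PCAux.pcOpt_le3 _ _ (PCAux.L2 hclq hne huv hc0u hc0v hfull)
    · push_neg at hC
      have hnoC : ∀ w, ¬(G.Adj u w ∧ G.Adj v w) := by
        intro w hw; exact hC w hw.1 hw.2
      have hsu : ¬(u = v ∨ G.Adj v u) := by
        rintro (rfl | h)
        · exact hne rfl
        · exact huv h.symm
      obtain ⟨p⟩ := hconn.preconnected u v
      obtain ⟨st, tt, hst, hsT, htT⟩ :=
        PCAux.crossing (T := {w | w = v ∨ G.Adj v w}) p (Or.inl rfl) hsu
      exact PCAux.pcOpt_le3 _ _ (PCAux.L1 hclq hne huv hnoC hst hsT htT)
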